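/- There exists a function assigning to every simple graph x on vertex set ℕ a pair (Δ_x, φ_x), where Δ_x is a simple graph on vertex set ℕ × ℕ and φ_x is a graph automorphism of Δ_x, such that: (i) Δ_x satisfies the extension property, hence is isomorphic to the random graph; (ii) the map n ↦ (0, n) is a graph isomorphism from x onto the induced subgraph of Δ_x on the row {0} × ℕ; (iii) φ_x((0, n)) = (1, n) and φ_x((1, n)) = (0, n) for all n ∈ ℕ, and φ_x maps each row {i} × ℕ with i ≥ 2 onto itself; and (iv) for all simple graphs x, y on ℕ, x is isomorphic to y if and only if there exists a graph isomorphism α : Δ_x → Δ_y with α ∘ φ_x = φ_y ∘ α. -/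

import Mathlib

/-- A simple graph satisfies the extension property (the defining homogeneity property
of the random graph) if for any disjoint finite sets `U, W` of vertices there is a
vertex outside `U ∪ W` adjacent to every vertex of `U` and to no vertex of `W`. -/
def ExtensionProperty {V : Type*} (G : SimpleGraph V) : Prop :=
  ∀ U W : Finset V, Disjoint U W →
    ∃ x, x ∉ U ∧ x ∉ W ∧ (∀ u ∈ U, G.Adj x u) ∧ (∀ w ∈ W, ¬ G.Adj x w)


noncomputable section

namespace Stmt11

instance : Denumerable (Finset (ℕ × ℕ)) := Denumerable.ofEncodableOfInfinite _

def D (k : ℕ) : Finset (ℕ × ℕ) := (Denumerable.eqv (Finset (ℕ × ℕ))).symm k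
def E (A : Finset (ℕ × ℕ)) : ℕ := Denumerable.eqv (Finset (ℕ × ℕ)) A

lemma D_E (A : Finset (ℕ × ℕ)) : D (E A) = A := by unfold D E; simp
lemma E_D (k : ℕ) : E (D k) = k := by unfold D E; simp

/-- partner within a row `i ≥ 2` -/
def pt (n : ℕ) : ℕ := if n % 2 = 0 then n + 1 else n - 1

lemma pt_pt (n : ℕ) : pt (pt n) = n := by unfold pt; split <;> split <;> omega
lemma pt_div2 (n : ℕ) : pt n / 2 = n / 2 := by unfold pt; split <;> omega
lemma pt_mod2 (n : ℕ) : pt n % 2 = 1 - n % 2 := by unfold pt; split <;> omega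
lemma pt_ne (n : ℕ) : pt n ≠ n := by unfold pt; split <;> omega
lemma pt_two_mul (a b : ℕ) (hb : b < 2) : pt (2 * a + b) = 2 * a + (1 - b) := by
  unfold pt; split <;> omega

/-- the involution of the vertex set -/
def psi (v : ℕ × ℕ) : ℕ × ℕ :=
  if v.1 = 0 then (1, v.2) else if v.1 = 1 then (0, v.2) else (v.1, pt v.2)

lemma psi_psi (v : ℕ × ℕ) : psi (psi v) = v := by
  unfold psi; rcases v with ⟨i, n⟩
  dsimp only
  split_ifs <;> simp_all [pt_pt] <;> omega

lemma psi_fst_lt (v : ℕ × ℕ) : (psi v).1 < 2 ↔ v.1 < 2 := by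
  unfold psi; split_ifs <;> simp <;> omega

lemma psi_fst_iff (v : ℕ × ℕ) (i : ℕ) (hi : 2 ≤ i) : (psi v).1 < i ↔ v.1 < i := by
  unfold psi; split_ifs <;> simp <;> omega

lemma psi_of_ge (v : ℕ × ℕ) (h : 2 ≤ v.1) : psi v = (v.1, pt v.2) := by
  unfold psi; split_ifs <;> first | rfl | omega

lemma psi_snd_of_lt (v : ℕ × ℕ) (h : v.1 < 2) : (psi v).2 = v.2 := by
  unfold psi; split_ifs <;> simp <;> omega

lemma psi_zero (n : ℕ) : psi (0, n) = (1, n) := by simp [psi]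
lemma psi_one (n : ℕ) : psi (1, n) = (0, n) := by simp [psi]

lemma psi_ne (v : ℕ × ℕ) : psi v ≠ v := by
  unfold psi; split_ifs with h1 h2
  · simp [Prod.ext_iff, h1]
  · simp [Prod.ext_iff, h2]
  · simp [Prod.ext_iff, pt_ne]

def psiPerm : Equiv.Perm (ℕ × ℕ) := Function.Involutive.toPerm psi psi_psi

def DD (n : ℕ) : Finset (ℕ × ℕ) :=
  if n % 2 = 0 then D (n / 2) else (D (n / 2)).image psi

lemma image_psi_psi (A : Finset (ℕ × ℕ)) : (A.image psi).image psi = A := by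
  rw [Finset.image_image]
  have : psi ∘ psi = id := funext psi_psi
  rw [this, Finset.image_id]

lemma DD_pt (n : ℕ) : DD (pt n) = (DD n).image psi := by
  unfold DD
  rcases Nat.mod_two_eq_zero_or_one n with h | h <;>
    simp [pt_div2, pt_mod2, h, image_psi_psi]

/-- the finite "target set" attached to a vertex -/
def FF (v : ℕ × ℕ) : Finset (ℕ × ℕ) :=
  if v.1 < 2 then ∅ else (DD v.2).filter (fun w => w.1 < v.1)

lemma FF_of_lt (v : ℕ × ℕ) (h : v.1 < 2) : FF v = ∅ := by simp [FF, h]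

lemma mem_FF_row {w v : ℕ × ℕ} (h : w ∈ FF v) : w.1 < v.1 := by
  unfold FF at h
  split_ifs at h with h1
  · simp at h
  · exact (Finset.mem_filter.mp h).2

lemma FF_psi (v : ℕ × ℕ) : FF (psi v) = (FF v).image psi := by
  by_cases h : v.1 < 2
  · rw [FF_of_lt _ h, FF_of_lt, Finset.image_empty]
    rw [psi_fst_lt]; exact h
  · push_neg at h
    rw [psi_of_ge _ h]
    unfold FF
    have h2 : ¬ (v.1 < 2) := by omega
    simp only [h2, if_false, if_neg (show ¬ ((v.1, pt v.2).1 < 2) by simpa using h2)]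
    rw [DD_pt]
    rw [Finset.filter_image]
    refine congrArg _ (Finset.filter_congr ?_)
    intro w _
    simp [psi_fst_iff w v.1 h]


def Sadj (x : SimpleGraph ℕ) (u v : ℕ × ℕ) : Prop :=
  (u.2 = v.2 ∧ u.1 ≠ v.1) ∨ (u.2 ≠ v.2 ∧ x.Adj u.2 v.2)

lemma Sadj_symm {x : SimpleGraph ℕ} {u v : ℕ × ℕ} (h : Sadj x u v) : Sadj x v u := by
  rcases h with ⟨a, b⟩ | ⟨a, b⟩
  · exact Or.inl ⟨a.symm, b.symm⟩
  · exact Or.inr ⟨a.symm, b.symm⟩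

def Delta (x : SimpleGraph ℕ) : SimpleGraph (ℕ × ℕ) where
  Adj u v := u ≠ v ∧ ((u.1 < 2 ∧ v.1 < 2 ∧ Sadj x u v) ∨ v ∈ FF u ∨ u ∈ FF v)
  symm := ⟨by
    rintro u v ⟨hne, h⟩
    refine ⟨hne.symm, ?_⟩
    rcases h with ⟨h1, h2, h3⟩ | h | h
    · exact Or.inl ⟨h2, h1, Sadj_symm h3⟩
    · exact Or.inr (Or.inr h)
    · exact Or.inr (Or.inl h)⟩
  loopless := ⟨fun v => by simp⟩

lemma delta_adj (x : SimpleGraph ℕ) (u v : ℕ × ℕ) :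
    (Delta x).Adj u v ↔
      u ≠ v ∧ ((u.1 < 2 ∧ v.1 < 2 ∧ Sadj x u v) ∨ v ∈ FF u ∨ u ∈ FF v) := Iff.rfl

/-- part (ii) -/
lemma row_zero (x : SimpleGraph ℕ) (m n : ℕ) :
    x.Adj m n ↔ (Delta x).Adj (0, m) (0, n) := by
  rw [delta_adj]
  constructor
  · intro h
    have hmn : m ≠ n := h.ne
    exact ⟨by simp [Prod.ext_iff, hmn], Or.inl ⟨by norm_num, by norm_num,
      Or.inr ⟨hmn, h⟩⟩⟩
  · rintro ⟨hne, h⟩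
    have hmn : m ≠ n := by simpa [Prod.ext_iff] using hne
    rcases h with ⟨_, _, h3⟩ | h | h
    · rcases h3 with ⟨a, b⟩ | ⟨a, b⟩
      · simp at b
      · exact b
    · rw [FF_of_lt (0, m) (by norm_num)] at h; simp at h
    · rw [FF_of_lt (0, n) (by norm_num)] at h; simp at h

/-- `psi` is an automorphism of every `Delta x`. -/
lemma delta_adj_psi (x : SimpleGraph ℕ) (u v : ℕ × ℕ) :
    (Delta x).Adj (psi u) (psi v) ↔ (Delta x).Adj u v := by
  rw [delta_adj, delta_adj]
  have hne : psi u ≠ psi v ↔ u ≠ v := by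
    constructor
    · intro h heq; exact h (by rw [heq])
    · intro h heq; exact h (by rw [← psi_psi u, heq, psi_psi])
  rw [hne]
  refine and_congr_right fun _ => ?_
  have hFF : ∀ a b : ℕ × ℕ, psi b ∈ FF (psi a) ↔ b ∈ FF a := by
    intro a b
    rw [FF_psi]
    constructor
    · intro h
      obtain ⟨c, hc, hcb⟩ := Finset.mem_image.mp h
      have : c = b := by rw [← psi_psi c, hcb, psi_psi]
      rwa [← this]
    · intro h; exact Finset.mem_image.mpr ⟨b, h, rfl⟩
  have hS : (psi u).1 < 2 ∧ (psi v).1 < 2 ∧ Sadj x (psi u) (psi v) ↔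
      u.1 < 2 ∧ v.1 < 2 ∧ Sadj x u v := by
    rw [psi_fst_lt, psi_fst_lt]
    refine and_congr_right fun hu => and_congr_right fun hv => ?_
    unfold Sadj
    rw [psi_snd_of_lt u hu, psi_snd_of_lt v hv]
    have hfst : (psi u).1 ≠ (psi v).1 ↔ u.1 ≠ v.1 := by
      unfold psi; split_ifs <;> simp <;> omega
    rw [hfst]
  rw [hS, hFF u v, hFF v u]

def phi (x : SimpleGraph ℕ) : Delta x ≃g Delta x :=
  { toEquiv := psiPerm, map_rel_iff' := fun {u v} => delta_adj_psi x u v }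

lemma phi_apply (x : SimpleGraph ℕ) (v : ℕ × ℕ) : phi x v = psi v := rfl

/-- part (i): extension property -/
lemma delta_ext (x : SimpleGraph ℕ) : ExtensionProperty (Delta x) := by
  intro U W hUW
  set i : ℕ := (U ∪ W).sup (fun v => v.1) + 2 with hi
  have hrow : ∀ v ∈ U ∪ W, v.1 < i := by
    intro v hv
    have h := Finset.le_sup (f := fun v : ℕ × ℕ => v.1) hv
    omega
  set t : ℕ × ℕ := (i, 2 * E U) with ht
  have hti : t.1 = i := rfl
  have hFt : FF t = U := by
    unfold FF
    rw [if_neg (by rw [hti]; omega)]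
    have : DD t.2 = U := by
      unfold DD
      have h2 : (2 * E U) % 2 = 0 := by omega
      rw [if_pos h2]
      have : 2 * E U / 2 = E U := by omega
      rw [this]; exact D_E U
    rw [this]
    apply Finset.filter_true_of_mem
    intro v hv
    exact hrow v (Finset.mem_union_left _ hv)
  have htUW : t ∉ U ∪ W := by
    intro h
    have := hrow t h
    omega
  refine ⟨t, fun h => htUW (Finset.mem_union_left _ h),
    fun h => htUW (Finset.mem_union_right _ h), ?_, ?_⟩
  · intro u hu
    have hu' : u.1 < i := hrow u (Finset.mem_union_left _ hu)
    refine ⟨?_, Or.inr (Or.inl (by rw [hFt]; exact hu))⟩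
    intro heq
    rw [← heq] at hu'
    omega
  · intro w hw
    rintro ⟨hne, h⟩
    have hw' : w.1 < i := hrow w (Finset.mem_union_right _ hw)
    rcases h with ⟨h1, _, _⟩ | h | h
    · rw [hti] at h1; omega
    · rw [hFt] at h
      exact (Finset.disjoint_left.mp hUW h) hw
    · have := mem_FF_row h
      omega

/-- part (iii-b) -/
lemma phi_row (x : SimpleGraph ℕ) (i : ℕ) (hi : 2 ≤ i) :
    (phi x) '' {v : ℕ × ℕ | v.1 = i} = {v : ℕ × ℕ | v.1 = i} := by
  ext v
  simp only [Set.mem_image, Set.mem_setOf_eq, phi_apply]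
  constructor
  · rintro ⟨w, hw, rfl⟩
    rw [psi_of_ge w (by omega)]
    exact hw
  · intro hv
    refine ⟨(v.1, pt v.2), hv, ?_⟩
    rw [psi_of_ge _ (show 2 ≤ (v.1, pt v.2).1 by simpa [hv] using hi)]
    simp [pt_pt]


def betaRow (sg : ℕ ≃ ℕ) (i : ℕ) (n : ℕ) : ℕ × ℕ :=
  if i < 2 then (i, sg n)
  else (i, 2 * E ((D (n / 2)).image
    (fun w => if h : w.1 < i then betaRow sg w.1 w.2 else w)) + n % 2)
termination_by i
decreasing_by exact h

def beta (sg : ℕ ≃ ℕ) (v : ℕ × ℕ) : ℕ × ℕ := betaRow sg v.1 v.2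

lemma betaRow_lt (sg : ℕ ≃ ℕ) (i n : ℕ) (h : i < 2) : betaRow sg i n = (i, sg n) := by
  rw [betaRow]; rw [if_pos h]

lemma betaRow_ge (sg : ℕ ≃ ℕ) (i n : ℕ) (h : ¬ i < 2) :
    betaRow sg i n = (i, 2 * E ((D (n / 2)).image
      (fun w => if w.1 < i then betaRow sg w.1 w.2 else w)) + n % 2) := by
  rw [betaRow]; rw [if_neg h]
  simp only [dite_eq_ite]

lemma beta_fst (sg : ℕ ≃ ℕ) (v : ℕ × ℕ) : (beta sg v).1 = v.1 := by
  unfold beta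
  by_cases h : v.1 < 2
  · rw [betaRow_lt sg _ _ h]
  · rw [betaRow_ge sg _ _ h]

lemma beta_lt (sg : ℕ ≃ ℕ) (v : ℕ × ℕ) (h : v.1 < 2) : beta sg v = (v.1, sg v.2) :=
  betaRow_lt sg v.1 v.2 h

lemma beta_ge (sg : ℕ ≃ ℕ) (v : ℕ × ℕ) (h : ¬ v.1 < 2) :
    beta sg v = (v.1, 2 * E ((D (v.2 / 2)).image
      (fun w => if w.1 < v.1 then beta sg w else w)) + v.2 % 2) := by
  unfold beta
  rw [betaRow_ge sg _ _ h]

lemma beta_beta (sg : ℕ ≃ ℕ) : ∀ v : ℕ × ℕ, beta sg.symm (beta sg v) = v := by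
  have main : ∀ i : ℕ, ∀ v : ℕ × ℕ, v.1 = i → beta sg.symm (beta sg v) = v := by
    intro i
    induction i using Nat.strong_induction_on with
    | _ i IH =>
      intro v hv
      by_cases h : v.1 < 2
      · rw [beta_lt sg v h, beta_lt sg.symm _ (by simpa using h)]
        simp
      · rw [beta_ge sg v h]
        set A := (D (v.2 / 2)).image (fun w => if w.1 < v.1 then beta sg w else w) with hA
        have hb : v.2 % 2 < 2 := Nat.mod_lt _ (by norm_num)
        rw [beta_ge sg.symm _ (by simpa using h)]
        simp only
        have hdiv : (2 * E A + v.2 % 2) / 2 = E A := by omega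
        have hmod : (2 * E A + v.2 % 2) % 2 = v.2 % 2 := by omega
        rw [hdiv, hmod, D_E]
        have himg : A.image (fun w => if w.1 < v.1 then beta sg.symm w else w)
            = D (v.2 / 2) := by
          rw [hA, Finset.image_image]
          have h1 : ((fun w : ℕ × ℕ => if w.1 < v.1 then beta sg.symm w else w) ∘
              (fun w => if w.1 < v.1 then beta sg w else w)) = fun w =>
              if w.1 < v.1 then beta sg.symm (beta sg w) else w := by
            funext w
            show (if ((if w.1 < v.1 then beta sg w else w)).1 < v.1
                then beta sg.symm (if w.1 < v.1 then beta sg w else w)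
                else (if w.1 < v.1 then beta sg w else w))
              = if w.1 < v.1 then beta sg.symm (beta sg w) else w
            by_cases hw : w.1 < v.1 <;> simp [hw, beta_fst]
          rw [h1]
          have h2 : ∀ w ∈ D (v.2 / 2),
              (if w.1 < v.1 then beta sg.symm (beta sg w) else w) = w := by
            intro w _
            split_ifs with hw
            · exact IH w.1 (by omega) w rfl
            · rfl
          calc (D (v.2/2)).image
                (fun w => if w.1 < v.1 then beta sg.symm (beta sg w) else w)
              = (D (v.2/2)).image id := Finset.image_congr (fun w hw => h2 w hw)
            _ = D (v.2/2) := Finset.image_id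
        rw [himg]
        have hh : 2 * (v.2 / 2) + v.2 % 2 = v.2 := by omega
        rw [E_D, hh]
  exact fun v => main v.1 v rfl

def betaE (sg : ℕ ≃ ℕ) : (ℕ × ℕ) ≃ (ℕ × ℕ) where
  toFun := beta sg
  invFun := beta sg.symm
  left_inv := beta_beta sg
  right_inv := by
    intro v
    have := beta_beta sg.symm v
    rwa [Equiv.symm_symm] at this

lemma beta_psi (sg : ℕ ≃ ℕ) (v : ℕ × ℕ) : beta sg (psi v) = psi (beta sg v) := by
  by_cases h : v.1 < 2
  · have h01 : v.1 = 0 ∨ v.1 = 1 := by omega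
    rcases h01 with h0 | h1
    · rw [show v = (0, v.2) from Prod.ext h0 rfl]
      rw [psi_zero, beta_lt sg (0, v.2) (by norm_num),
        beta_lt sg (1, v.2) (by norm_num), psi_zero]
    · rw [show v = (1, v.2) from Prod.ext h1 rfl]
      rw [psi_one, beta_lt sg (1, v.2) (by norm_num),
        beta_lt sg (0, v.2) (by norm_num), psi_one]
  · push_neg at h
    rw [psi_of_ge v h, beta_ge sg v (by omega)]
    rw [beta_ge sg (v.1, pt v.2) (by simp; omega)]
    rw [psi_of_ge (v.1, _) (by simpa using h)]
    simp only [pt_div2, pt_mod2]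
    congr 1
    rw [pt_two_mul _ _ (Nat.mod_lt _ (by norm_num))]

lemma FF_beta (sg : ℕ ≃ ℕ) (v : ℕ × ℕ) : FF (beta sg v) = (FF v).image (beta sg) := by
  by_cases h : v.1 < 2
  · rw [FF_of_lt v h, FF_of_lt _ (by rw [beta_fst]; exact h), Finset.image_empty]
  · push_neg at h
    rw [beta_ge sg v (by omega)]
    set A := (D (v.2 / 2)).image (fun w => if w.1 < v.1 then beta sg w else w) with hA
    have hb : v.2 % 2 < 2 := Nat.mod_lt _ (by norm_num)
    unfold FF
    rw [if_neg (by simp; omega), if_neg (by omega)]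
    simp only
    have hdiv : (2 * E A + v.2 % 2) / 2 = E A := by omega
    have hmod : (2 * E A + v.2 % 2) % 2 = v.2 % 2 := by omega
    unfold DD
    rw [hdiv, hmod, D_E]
    have key : ∀ B : Finset (ℕ × ℕ),
        ((B.image (fun w => if w.1 < v.1 then beta sg w else w)).filter
          (fun w => w.1 < v.1))
        = (B.filter (fun w => w.1 < v.1)).image (beta sg) := by
      intro B
      rw [Finset.filter_image]
      have h1 : B.filter (fun a =>
          ((fun w => if w.1 < v.1 then beta sg w else w) a).1 < v.1)
          = B.filter (fun w => w.1 < v.1) := by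
        apply Finset.filter_congr
        intro w _
        by_cases hw : w.1 < v.1 <;> simp [hw, beta_fst]
      rw [h1]
      apply Finset.image_congr
      intro w hw
      simp only [Finset.coe_filter, Set.mem_setOf_eq] at hw
      simp [hw.2]
    rcases Nat.mod_two_eq_zero_or_one v.2 with hp | hp <;> rw [hp]
    · rw [if_pos rfl, if_pos rfl, hA]
      exact key _
    · rw [if_neg (by norm_num), if_neg (by norm_num), hA]
      -- LHS: ((image beta' (D k)).image psi).filter (<v.1)
      -- RHS: (((D k).image psi).filter (< v.1)).image (beta sg)
      rw [Finset.image_image, Finset.filter_image, Finset.filter_image]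
      have h2 : (D (v.2/2)).filter (fun a =>
          ((psi ∘ fun w => if w.1 < v.1 then beta sg w else w) a).1 < v.1)
          = (D (v.2/2)).filter (fun w => w.1 < v.1) := by
        apply Finset.filter_congr
        intro w _
        simp only [Function.comp]
        rw [psi_fst_iff _ _ h]
        by_cases hw : w.1 < v.1 <;> simp [hw, beta_fst, psi_fst_iff _ _ h]
      have h3 : (D (v.2/2)).filter (fun a => (psi a).1 < v.1)
          = (D (v.2/2)).filter (fun w => w.1 < v.1) := by
        apply Finset.filter_congr
        intro w _
        rw [psi_fst_iff _ _ h]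
      rw [h2, h3, Finset.image_image]
      apply Finset.image_congr
      intro w hw
      simp only [Finset.coe_filter, Set.mem_setOf_eq] at hw
      simp only [Function.comp]
      rw [if_pos hw.2]
      exact (beta_psi sg w).symm


lemma beta_inj (sg : ℕ ≃ ℕ) {u v : ℕ × ℕ} (h : beta sg u = beta sg v) : u = v := by
  have := congrArg (beta sg.symm) h
  rwa [beta_beta, beta_beta] at this

/-- forward direction of (iv) -/
def betaIso {x y : SimpleGraph ℕ} (σ : x ≃g y) : Delta x ≃g Delta y where
  toEquiv := betaE σ.toEquiv
  map_rel_iff' := by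
    intro u v
    show (Delta y).Adj (beta σ.toEquiv u) (beta σ.toEquiv v) ↔ (Delta x).Adj u v
    rw [delta_adj, delta_adj]
    have hne : beta σ.toEquiv u ≠ beta σ.toEquiv v ↔ u ≠ v := by
      constructor
      · intro h heq; exact h (by rw [heq])
      · intro h heq; exact h (beta_inj _ heq)
    rw [hne]
    refine and_congr_right fun _ => ?_
    have hFF : ∀ a b : ℕ × ℕ,
        beta σ.toEquiv b ∈ FF (beta σ.toEquiv a) ↔ b ∈ FF a := by
      intro a b
      rw [FF_beta]
      constructor
      · intro h
        obtain ⟨c, hc, hcb⟩ := Finset.mem_image.mp h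
        rwa [beta_inj _ hcb] at hc
      · intro h; exact Finset.mem_image.mpr ⟨b, h, rfl⟩
    have hS : (beta σ.toEquiv u).1 < 2 ∧ (beta σ.toEquiv v).1 < 2 ∧
        Sadj y (beta σ.toEquiv u) (beta σ.toEquiv v) ↔
        u.1 < 2 ∧ v.1 < 2 ∧ Sadj x u v := by
      rw [beta_fst, beta_fst]
      refine and_congr_right fun hu => and_congr_right fun hv => ?_
      rw [beta_lt _ u hu, beta_lt _ v hv]
      unfold Sadj
      simp only
      constructor
      · rintro (⟨a, b⟩ | ⟨a, b⟩)
        · exact Or.inl ⟨σ.toEquiv.injective a, b⟩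
        · exact Or.inr ⟨fun hh => a (by rw [hh]), σ.map_adj_iff.mp b⟩
      · rintro (⟨a, b⟩ | ⟨a, b⟩)
        · exact Or.inl ⟨by rw [a], b⟩
        · exact Or.inr ⟨fun hh => a (σ.toEquiv.injective hh), σ.map_adj_iff.mpr b⟩
    rw [hS, hFF u v, hFF v u]

lemma betaIso_comm {x y : SimpleGraph ℕ} (σ : x ≃g y) (v : ℕ × ℕ) :
    betaIso σ (phi x v) = phi y (betaIso σ v) := by
  show beta σ.toEquiv (psi v) = psi (beta σ.toEquiv v)
  exact beta_psi _ v

/-- vertices of the first two rows are exactly those adjacent to their `psi`-image -/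
lemma adj_psi_iff (x : SimpleGraph ℕ) (v : ℕ × ℕ) :
    (Delta x).Adj v (psi v) ↔ v.1 < 2 := by
  rw [delta_adj]
  constructor
  · rintro ⟨hne, h⟩
    rcases h with ⟨h1, _, _⟩ | h | h
    · exact h1
    · by_contra hv
      have := mem_FF_row h
      rw [psi_of_ge v (by omega)] at this
      simp at this
    · by_contra hv
      have := mem_FF_row h
      rw [psi_of_ge v (by omega)] at this
      simp at this
  · intro hv
    refine ⟨(psi_ne v).symm, Or.inl ⟨hv, (psi_fst_lt v).mpr hv, ?_⟩⟩
    left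
    refine ⟨(psi_snd_of_lt v hv).symm, ?_⟩
    unfold psi
    split_ifs with h1 h2 <;> simp <;> omega

section Backward

variable {x y : SimpleGraph ℕ} (α : Delta x ≃g Delta y)
  (hc : ∀ v : ℕ × ℕ, α (psi v) = psi (α v))

include hc

lemma alpha_row (v : ℕ × ℕ) : (α v).1 < 2 ↔ v.1 < 2 := by
  rw [← adj_psi_iff y (α v), ← adj_psi_iff x v, ← hc v]
  exact α.map_adj_iff

lemma alpha_symm_comm (w : ℕ × ℕ) : α.symm (psi w) = psi (α.symm w) := by
  apply α.toEquiv.injective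
  show α (α.symm (psi w)) = α (psi (α.symm w))
  rw [hc (α.symm w), RelIso.apply_symm_apply, RelIso.apply_symm_apply]

lemma alpha_key (n : ℕ) : (α.symm (0, (α (0, n)).2)).2 = n := by
  have h2 : (α (0, n)).1 < 2 := by
    rw [alpha_row α hc]; norm_num
  have hval : α (0, n) = (0, (α (0, n)).2) ∨ α (0, n) = (1, (α (0, n)).2) := by
    rcases (show (α (0, n)).1 = 0 ∨ (α (0, n)).1 = 1 by omega) with h | h
    · exact Or.inl (Prod.ext h rfl)
    · exact Or.inr (Prod.ext h rfl)
  rcases hval with h | h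
  · rw [← h]; simp
  · have : (0, (α (0, n)).2) = psi (α (0, n)) := by rw [h, psi_one]
    rw [this, alpha_symm_comm α hc]
    simp [psi_zero]

lemma alpha_sigma_inj {m n : ℕ} (h : (α (0, m)).2 = (α (0, n)).2) : m = n := by
  have h1 := alpha_key α hc m
  have h2 := alpha_key α hc n
  rw [h] at h1
  rw [← h1]; exact h2

omit hc in
lemma low_adj (a b c d : ℕ) (ha : a < 2) (hb : b < 2) (hcd : c ≠ d) :
    (Delta y).Adj (a, c) (b, d) ↔ y.Adj c d := by
  rw [delta_adj]
  constructor
  · rintro ⟨hne, h⟩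
    rcases h with ⟨_, _, h3⟩ | h | h
    · rcases h3 with ⟨u, _⟩ | ⟨_, u⟩
      · simp at u; exact absurd u hcd
      · exact u
    · rw [FF_of_lt (a, c) (by simpa using ha)] at h; simp at h
    · rw [FF_of_lt (b, d) (by simpa using hb)] at h; simp at h
  · intro h
    exact ⟨by simp [Prod.ext_iff, hcd], Or.inl ⟨by simpa using ha, by simpa using hb,
      Or.inr ⟨by simpa using hcd, h⟩⟩⟩

lemma alpha_adj (m n : ℕ) : x.Adj m n ↔ y.Adj (α (0, m)).2 (α (0, n)).2 := by
  have hm : (α (0, m)).1 < 2 := by rw [alpha_row α hc]; norm_num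
  have hn : (α (0, n)).1 < 2 := by rw [alpha_row α hc]; norm_num
  have em : α (0, m) = ((α (0, m)).1, (α (0, m)).2) := rfl
  constructor
  · intro h
    have hmn : m ≠ n := h.ne
    have h2 : (Delta y).Adj (α (0, m)) (α (0, n)) :=
      α.map_adj_iff.mpr ((row_zero x m n).mp h)
    rw [em, show α (0, n) = ((α (0, n)).1, (α (0, n)).2) from rfl] at h2
    exact (low_adj _ _ _ _ hm hn
      (fun hh => hmn (alpha_sigma_inj α hc hh))).mp h2
  · intro h
    have hmn : m ≠ n := by
      intro hh
      rw [hh] at h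
      exact y.loopless.irrefl _ h
    have h2 : (Delta y).Adj (α (0, m)) (α (0, n)) := by
      rw [em, show α (0, n) = ((α (0, n)).1, (α (0, n)).2) from rfl]
      exact (low_adj _ _ _ _ hm hn (fun hh => hmn (alpha_sigma_inj α hc hh))).mpr h
    exact (row_zero x m n).mpr (α.map_adj_iff.mp h2)

lemma backward_iso : Nonempty (x ≃g y) := by
  have hback : ∀ v : ℕ × ℕ, α.symm (psi v) = psi (α.symm v) := alpha_symm_comm α hc
  refine ⟨{ toFun := fun n => (α (0, n)).2
            invFun := fun n => (α.symm (0, n)).2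
            left_inv := alpha_key α hc
            right_inv := ?_
            map_rel_iff' := ?_ }⟩
  · intro n
    have := alpha_key α.symm hback n
    simpa using this
  · intro m n
    exact (alpha_adj α hc m n).symm

end Backward

end Stmt11

/-- There is an assignment `x ↦ (Δ_x, φ_x)` of a graph `Δ_x` on `ℕ × ℕ`
and an automorphism `φ_x` of `Δ_x` to each simple graph `x` on `ℕ` such that:
(i) `Δ_x` has the extension property (hence is isomorphic to the random graph);
(ii) `n ↦ (0, n)` is an isomorphism from `x` onto the induced subgraph on row `0`;
(iii) `φ_x` interchanges `(0, n)` and `(1, n)` and maps each row `i ≥ 2` onto itself;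
(iv) `x ≅ y` iff there is an isomorphism `α : Δ_x → Δ_y` with `α ∘ φ_x = φ_y ∘ α`. -/
theorem stmt_11 :
    ∃ (Δ : SimpleGraph ℕ → SimpleGraph (ℕ × ℕ))
      (φ : ∀ x : SimpleGraph ℕ, Δ x ≃g Δ x),
      (∀ x : SimpleGraph ℕ, ExtensionProperty (Δ x)) ∧
      (∀ x : SimpleGraph ℕ, ∀ m n : ℕ, x.Adj m n ↔ (Δ x).Adj (0, m) (0, n)) ∧
      (∀ x : SimpleGraph ℕ, ∀ n : ℕ, φ x (0, n) = (1, n) ∧ φ x (1, n) = (0, n)) ∧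
      (∀ x : SimpleGraph ℕ, ∀ i : ℕ, 2 ≤ i →
        (φ x) '' {v : ℕ × ℕ | v.1 = i} = {v : ℕ × ℕ | v.1 = i}) ∧
      (∀ x y : SimpleGraph ℕ,
        Nonempty (x ≃g y) ↔ ∃ α : Δ x ≃g Δ y, ∀ v : ℕ × ℕ, α (φ x v) = φ y (α v)) := by
  refine ⟨Stmt11.Delta, Stmt11.phi, Stmt11.delta_ext, Stmt11.row_zero, ?_, Stmt11.phi_row, ?_⟩
  · intro x n
    exact ⟨Stmt11.psi_zero n, Stmt11.psi_one n⟩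
  · intro x y
    constructor
    · rintro ⟨σ⟩
      exact ⟨Stmt11.betaIso σ, Stmt11.betaIso_comm σ⟩
    · rintro ⟨α, hcomm⟩
      exact Stmt11.backward_iso α hcomm
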